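/- For positive-definite density matrices ρ_k, ρ_{k+1} and interpolated states ρ'_ℓ = (1 − ℓ/n)ρ_k + (ℓ/n)ρ_{k+1}, the discrete heat functional Λ_n = Σ_{ℓ=0}^{n−1} tr[(ρ'_ℓ − ρ'_{ℓ+1}) ln ρ'_{ℓ+1}] converges to the entropy change S(ρ_{k+1}) − S(ρ_k) as n → ∞ (asymptotic saturation of the Clausius inequality). -/

import Mathlib

open Matrix BigOperators ComplexOrder

/-- Apply a real function to a Hermitian matrix via the spectral theorem
(junk value `0` for non-Hermitian input). -/
noncomputable def matFun {n : Type*} [Fintype n] [DecidableEq n]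
    (f : ℝ → ℝ) (A : Matrix n n ℂ) : Matrix n n ℂ :=
  if hA : A.IsHermitian then
    (hA.eigenvectorUnitary : Matrix n n ℂ) *
      Matrix.diagonal (fun i => (f (hA.eigenvalues i) : ℂ)) *
      star (hA.eigenvectorUnitary : Matrix n n ℂ)
  else 0

/-- Matrix logarithm of a Hermitian matrix. -/
noncomputable def matLog {n : Type*} [Fintype n] [DecidableEq n]
    (A : Matrix n n ℂ) : Matrix n n ℂ := matFun Real.log A

/-- Matrix exponential of a Hermitian matrix. -/
noncomputable def matExp {n : Type*} [Fintype n] [DecidableEq n]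
    (A : Matrix n n ℂ) : Matrix n n ℂ := matFun Real.exp A

/-- The Gibbs state `e^{-βH}/tr[e^{-βH}]`. -/
noncomputable def gibbs {n : Type*} [Fintype n] [DecidableEq n]
    (β : ℝ) (H : Matrix n n ℂ) : Matrix n n ℂ :=
  (matExp ((-β) • H)).trace⁻¹ • matExp ((-β) • H)

/-- A density matrix: positive semidefinite with unit trace. -/
def IsDensity {n : Type*} [Fintype n] [DecidableEq n] (ρ : Matrix n n ℂ) : Prop :=
  ρ.PosSemidef ∧ ρ.trace = 1

/-- von Neumann entropy `S(ρ) = -tr[ρ ln ρ]`. -/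
noncomputable def vnEntropy {n : Type*} [Fintype n] [DecidableEq n]
    (ρ : Matrix n n ℂ) : ℝ := -((ρ * matLog ρ).trace.re)

/-- Relative entropy `S(ρ‖σ) = tr[ρ ln ρ] - tr[ρ ln σ]`. -/
noncomputable def relEnt {n : Type*} [Fintype n] [DecidableEq n]
    (ρ σ : Matrix n n ℂ) : ℝ :=
  ((ρ * matLog ρ).trace - (ρ * matLog σ).trace).re


section ClausiusAux
variable {n : Type*} [Fintype n] [DecidableEq n]

lemma matLog_eq (A : Matrix n n ℂ) (hA : A.IsHermitian) :
    matLog A = (hA.eigenvectorUnitary : Matrix n n ℂ) *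
      Matrix.diagonal (fun i => (Real.log (hA.eigenvalues i) : ℂ)) *
      star (hA.eigenvectorUnitary : Matrix n n ℂ) := by
  rw [matLog, matFun, dif_pos hA]

lemma trace_mul_matLog (B A : Matrix n n ℂ) (hA : A.IsHermitian) :
    (B * matLog A).trace = ∑ i,
      (star (hA.eigenvectorUnitary : Matrix n n ℂ) *
        (B * (hA.eigenvectorUnitary : Matrix n n ℂ))) i i *
      (Real.log (hA.eigenvalues i) : ℂ) := by
  set U := (hA.eigenvectorUnitary : Matrix n n ℂ) with hUdef
  rw [matLog_eq A hA, ← hUdef]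
  rw [show B * (U * Matrix.diagonal (fun i => (Real.log (hA.eigenvalues i) : ℂ)) * star U)
      = (B * U) * Matrix.diagonal (fun i => (Real.log (hA.eigenvalues i) : ℂ)) * star U from by
    simp only [mul_assoc], trace_mul_cycle]
  simp only [Matrix.trace, diag_apply, ← mul_assoc, Matrix.mul_diagonal]

lemma conj_conj (U A : Matrix n n ℂ) (hU : star U * U = 1) :
    star U * ((U * A * star U) * U) = A := by
  simp only [mul_assoc, hU, mul_one]
  rw [← mul_assoc, hU, one_mul]

lemma trace_conj (U A : Matrix n n ℂ) (hU : star U * U = 1) :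
    (U * A * star U).trace = A.trace := by
  rw [trace_mul_cycle, hU, one_mul]

lemma klein (ρ σ : Matrix n n ℂ) (hρ : ρ.PosDef) (hσ : σ.PosDef)
    (hρt : ρ.trace = 1) (hσt : σ.trace = 1) :
    0 ≤ ((ρ * matLog ρ).trace - (ρ * matLog σ).trace).re := by
  have hρh : ρ.IsHermitian := hρ.1
  have hσh : σ.IsHermitian := hσ.1
  set U := (hρh.eigenvectorUnitary : Matrix n n ℂ) with hUdef
  set V := (hσh.eigenvectorUnitary : Matrix n n ℂ) with hVdef
  set p := hρh.eigenvalues with hpdef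
  set q := hσh.eigenvalues with hqdef
  have hp : ∀ i, 0 < p i := hρ.eigenvalues_pos
  have hq : ∀ i, 0 < q i := hσ.eigenvalues_pos
  have hU' : star U * U = 1 := mem_unitaryGroup_iff'.mp hρh.eigenvectorUnitary.2
  have hU : U * star U = 1 := mem_unitaryGroup_iff.mp hρh.eigenvectorUnitary.2
  have hV' : star V * V = 1 := mem_unitaryGroup_iff'.mp hσh.eigenvectorUnitary.2
  have hV : V * star V = 1 := mem_unitaryGroup_iff.mp hσh.eigenvectorUnitary.2
  set M := star U * V with hMdef
  set c : n → n → ℝ := fun i j => Complex.normSq (M i j) with hcdef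
  have hc0 : ∀ i j, 0 ≤ c i j := fun i j => Complex.normSq_nonneg _
  -- diagonalization identities
  have hdiagρ : star U * (ρ * U) = Matrix.diagonal (fun i => (p i : ℂ)) := by
    have := congrArg (fun X => star U * (X * U)) hρh.spectral_theorem
    simp only [Unitary.conjStarAlgAut_apply] at this
    rw [this, conj_conj _ _ hU']
    rfl
  have hcross : star V * (ρ * V) =
      star M * Matrix.diagonal (fun i => (p i : ℂ)) * M := by
    have := congrArg (fun X => star V * (X * V)) hρh.spectral_theorem
    simp only [Unitary.conjStarAlgAut_apply] at this
    rw [this, hMdef]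
    simp only [Matrix.star_mul, star_star, mul_assoc]
    rfl
  -- row and column sums of c
  have hrow : ∀ i, ∑ j, (c i j : ℂ) = 1 := by
    intro i
    have hMM : M * star M = 1 := by
      rw [hMdef, Matrix.star_mul, star_star, mul_assoc, ← mul_assoc V, hV, one_mul, hU']
    have := congrFun (congrFun hMM i) i
    simp only [Matrix.mul_apply, Matrix.star_apply, Matrix.one_apply_eq] at this
    rw [← this]
    refine Finset.sum_congr rfl fun j _ => ?_
    rw [Complex.star_def, Complex.mul_conj]
  have hcol : ∀ j, ∑ i, (c i j : ℂ) = 1 := by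
    intro j
    have hMM : star M * M = 1 := by
      rw [hMdef, Matrix.star_mul, star_star, mul_assoc, ← mul_assoc U, hU, one_mul, hV']
    have := congrFun (congrFun hMM j) j
    simp only [Matrix.mul_apply, Matrix.star_apply, Matrix.one_apply_eq] at this
    rw [← this]
    refine Finset.sum_congr rfl fun i _ => ?_
    rw [Complex.star_def, mul_comm, Complex.mul_conj]
  have hrowR : ∀ i, ∑ j, c i j = 1 := fun i => by exact_mod_cast hrow i
  have hcolR : ∀ j, ∑ i, c i j = 1 := fun j => by exact_mod_cast hcol j
  -- the two traces
  have hA : (ρ * matLog ρ).trace = ((∑ i, p i * Real.log (p i) : ℝ) : ℂ) := by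
    rw [trace_mul_matLog ρ ρ hρh]
    simp only [← hUdef, ← hpdef, hdiagρ, Matrix.diagonal_apply_eq]
    push_cast
    ring
  have hB : (ρ * matLog σ).trace
      = ((∑ j, ∑ i, c i j * (p i * Real.log (q j)) : ℝ) : ℂ) := by
    rw [trace_mul_matLog ρ σ hσh]
    simp only [← hVdef, ← hqdef, hcross]
    push_cast
    refine Finset.sum_congr rfl fun j _ => ?_
    simp only [Matrix.mul_apply, Matrix.diagonal_apply, mul_ite, mul_zero, ite_mul, zero_mul,
      Finset.sum_ite_eq, Finset.sum_ite_eq', Finset.mem_univ, if_true,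
      Matrix.star_apply, Complex.star_def]
    rw [Finset.sum_mul]
    refine Finset.sum_congr rfl fun i _ => ?_
    have hz : (starRingEnd ℂ) (M i j) * M i j = ((c i j : ℝ) : ℂ) := by
      rw [mul_comm, Complex.mul_conj]
    calc (starRingEnd ℂ) (M i j) * (p i : ℂ) * M i j * (Real.log (q j) : ℂ)
        = ((starRingEnd ℂ) (M i j) * M i j) * ((p i : ℂ) * (Real.log (q j) : ℂ)) := by ring
      _ = (c i j : ℂ) * ((p i : ℂ) * (Real.log (q j) : ℂ)) := by rw [hz]
  -- eigenvalue sums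
  have htrρ : ∑ i, p i = 1 := by
    have h1 : ρ.trace = ∑ i, (p i : ℂ) := by
      have h2 := congrArg Matrix.trace hρh.spectral_theorem
      rw [h2, Unitary.conjStarAlgAut_apply, trace_conj _ _ hU', trace_diagonal]
      rfl
    rw [hρt] at h1
    exact_mod_cast h1.symm
  have htrσ : ∑ j, q j = 1 := by
    have h1 : σ.trace = ∑ j, (q j : ℂ) := by
      have h2 := congrArg Matrix.trace hσh.spectral_theorem
      rw [h2, Unitary.conjStarAlgAut_apply, trace_conj _ _ hV', trace_diagonal]
      rfl
    rw [hσt] at h1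
    exact_mod_cast h1.symm
  rw [hA, hB, ← Complex.ofReal_sub, Complex.ofReal_re]
  -- rewrite first sum as a double sum
  have hApart : ∑ i, p i * Real.log (p i)
      = ∑ j, ∑ i, c i j * (p i * Real.log (p i)) := by
    rw [Finset.sum_comm]
    refine Finset.sum_congr rfl fun i _ => ?_
    rw [← Finset.sum_mul, hrowR i, one_mul]
  rw [hApart, ← Finset.sum_sub_distrib]
  simp_rw [← Finset.sum_sub_distrib]
  have hzero : ∑ j, ∑ i, c i j * (p i - q j) = 0 := by
    have hj : ∀ j, ∑ i, c i j * (p i - q j) = (∑ i, c i j * p i) - q j := by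
      intro j
      simp only [mul_sub, Finset.sum_sub_distrib]
      rw [← Finset.sum_mul, hcolR j, one_mul]
    simp only [hj, Finset.sum_sub_distrib, htrσ]
    rw [Finset.sum_comm]
    have : ∀ i, ∑ j, c i j * p i = p i := fun i => by
      rw [← Finset.sum_mul, hrowR i, one_mul]
    simp only [this, htrρ, sub_self]
  calc (0:ℝ) = ∑ j, ∑ i, c i j * (p i - q j) := hzero.symm
    _ ≤ ∑ j, ∑ i, (c i j * (p i * Real.log (p i)) - c i j * (p i * Real.log (q j))) := by
      refine Finset.sum_le_sum fun j _ => Finset.sum_le_sum fun i _ => ?_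
      have h1 : Real.log (q j) - Real.log (p i) ≤ q j / p i - 1 := by
        rw [← Real.log_div (hq j).ne' (hp i).ne']
        exact Real.log_le_sub_one_of_pos (div_pos (hq j) (hp i))
      have h2 := mul_le_mul_of_nonneg_left h1 (hp i).le
      have h3 : p i * (q j / p i) = q j := by
        rw [mul_comm]; exact div_mul_cancel₀ _ (hp i).ne'
      have h4 : p i - q j ≤ p i * Real.log (p i) - p i * Real.log (q j) := by
        rw [mul_sub, mul_sub, h3] at h2
        linarith
      have h5 := mul_le_mul_of_nonneg_left h4 (hc0 i j)
      have h6 := mul_sub (c i j) (p i * Real.log (p i)) (p i * Real.log (q j))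
      linarith

lemma posSemidef_rsmul {A : Matrix n n ℂ} (hA : A.PosSemidef) {r : ℝ} (hr : 0 ≤ r) :
    (r • A).PosSemidef := by
  constructor
  · unfold Matrix.IsHermitian
    rw [conjTranspose_smul, hA.1]; norm_num
  · intro x
    exact (Matrix.PosSemidef.smul hA hr).2 x

lemma posDef_rsmul {A : Matrix n n ℂ} (hA : A.PosDef) {r : ℝ} (hr : 0 < r) :
    (r • A).PosDef := by
  constructor
  · unfold Matrix.IsHermitian
    rw [conjTranspose_smul, hA.1]; norm_num
  · intro x hx
    exact (Matrix.PosDef.smul hA hr).2 hx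


end ClausiusAux

/-- asymptotic saturation of the Clausius inequality. -/
theorem interpolated_Lambda_tendsto {n : Type*} [Fintype n] [DecidableEq n]
    (ρk ρk1 : Matrix n n ℂ) (hk : IsDensity ρk) (hk1 : IsDensity ρk1)
    (hkpd : ρk.PosDef) (hk1pd : ρk1.PosDef) :
    Filter.Tendsto
      (fun m : ℕ => ∑ ℓ ∈ Finset.range m,
        ((((1 - (ℓ : ℝ) / m) • ρk + ((ℓ : ℝ) / m) • ρk1) -
          ((1 - ((ℓ + 1 : ℕ) : ℝ) / m) • ρk + (((ℓ + 1 : ℕ) : ℝ) / m) • ρk1)) *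
          matLog ((1 - ((ℓ + 1 : ℕ) : ℝ) / m) • ρk + (((ℓ + 1 : ℕ) : ℝ) / m) • ρk1)).trace.re)
      Filter.atTop (nhds (vnEntropy ρk1 - vnEntropy ρk)) := by
  obtain ⟨hkpsd, hktr⟩ := hk
  obtain ⟨hk1psd, hk1tr⟩ := hk1
  set ΔS : ℝ := vnEntropy ρk1 - vnEntropy ρk with hΔS
  set Cst : ℝ := ((ρk - ρk1) * matLog ρk).trace.re - ((ρk - ρk1) * matLog ρk1).trace.re
    with hCst
  set f : ℕ → ℝ := fun m : ℕ => ∑ ℓ ∈ Finset.range m,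
        ((((1 - (ℓ : ℝ) / m) • ρk + ((ℓ : ℝ) / m) • ρk1) -
          ((1 - ((ℓ + 1 : ℕ) : ℝ) / m) • ρk + (((ℓ + 1 : ℕ) : ℝ) / m) • ρk1)) *
          matLog ((1 - ((ℓ + 1 : ℕ) : ℝ) / m) • ρk + (((ℓ + 1 : ℕ) : ℝ) / m) • ρk1)).trace.re
    with hf
  have key : ∀ m : ℕ, 1 ≤ m → f m ≤ ΔS ∧ ΔS - Cst * (1 / m) ≤ f m := by
    intro m hm
    have hm0 : (m : ℝ) ≠ 0 := Nat.cast_ne_zero.mpr (by omega)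
    have hmpos : (0 : ℝ) < m := by positivity
    set P : ℕ → Matrix n n ℂ := fun ℓ =>
      (1 - (ℓ : ℝ) / m) • ρk + ((ℓ : ℝ) / m) • ρk1 with hP
    have hfm : f m = ∑ ℓ ∈ Finset.range m,
        ((P ℓ - P (ℓ + 1)) * matLog (P (ℓ + 1))).trace.re := rfl
    have hP0 : P 0 = ρk := by simp [hP]
    have hPm : P m = ρk1 := by
      have h1 : (m : ℝ) / m = 1 := div_self hm0
      simp [hP, h1]
    have hPD : ∀ ℓ, ℓ ≤ m → (P ℓ).PosDef := by
      intro ℓ hℓ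
      rcases Nat.eq_zero_or_pos ℓ with h0 | hpos
      · rw [h0, hP0]; exact hkpd
      · have hb : 0 < (ℓ : ℝ) / m := div_pos (by exact_mod_cast hpos) hmpos
        have ha : 0 ≤ 1 - (ℓ : ℝ) / m := by
          rw [sub_nonneg]
          exact (div_le_one hmpos).2 (by exact_mod_cast hℓ)
        exact Matrix.PosDef.posSemidef_add (posSemidef_rsmul hkpsd ha)
          (posDef_rsmul hk1pd hb)
    have hPtr : ∀ ℓ : ℕ, (P ℓ).trace = 1 := by
      intro ℓ
      show ((1 - (ℓ : ℝ) / m) • ρk + ((ℓ : ℝ) / m) • ρk1).trace = 1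
      rw [trace_add, trace_smul, trace_smul, hktr, hk1tr, ]
      rw [Complex.real_smul, Complex.real_smul]
      push_cast
      ring
    have hstep : ∀ ℓ : ℕ, P ℓ - P (ℓ + 1) = ((1 : ℝ) / m) • (ρk - ρk1) := by
      intro ℓ
      show ((1 - (ℓ : ℝ) / m) • ρk + ((ℓ : ℝ) / m) • ρk1) -
          ((1 - ((ℓ + 1 : ℕ) : ℝ) / m) • ρk + (((ℓ + 1 : ℕ) : ℝ) / m) • ρk1)
          = ((1 : ℝ) / m) • (ρk - ρk1)
      ext i j
      simp only [Matrix.sub_apply, Matrix.add_apply, Matrix.smul_apply, Complex.real_smul]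
      push_cast
      ring
    set g : ℕ → ℝ := fun ℓ => (P ℓ * matLog (P ℓ)).trace.re with hg
    set h : ℕ → ℝ := fun ℓ => ((ρk - ρk1) * matLog (P ℓ)).trace.re with hh
    set E : ℕ → ℝ := fun ℓ =>
      (P ℓ * matLog (P ℓ)).trace.re - (P ℓ * matLog (P (ℓ + 1))).trace.re with hE
    set E' : ℕ → ℝ := fun ℓ =>
      (P (ℓ + 1) * matLog (P (ℓ + 1))).trace.re - (P (ℓ + 1) * matLog (P ℓ)).trace.re with hE'
    have hterm : ∀ ℓ : ℕ, ((P ℓ - P (ℓ + 1)) * matLog (P (ℓ + 1))).trace.re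
        = (g ℓ - g (ℓ + 1)) - E ℓ := by
      intro ℓ
      simp only [hg, hE, sub_mul, trace_sub, Complex.sub_re]
      ring
    have hsum : f m = (g 0 - g m) - ∑ ℓ ∈ Finset.range m, E ℓ := by
      rw [hfm, Finset.sum_congr rfl fun ℓ _ => hterm ℓ, Finset.sum_sub_distrib,
        Finset.sum_range_sub' g]
    have hg0m : g 0 - g m = ΔS := by
      rw [hg]
      simp only [hP0, hPm, hΔS, vnEntropy]
      ring
    have hE0 : ∀ ℓ, ℓ < m → 0 ≤ E ℓ := by
      intro ℓ hℓ
      have := klein (P ℓ) (P (ℓ + 1)) (hPD ℓ hℓ.le) (hPD (ℓ + 1) hℓ) (hPtr ℓ) (hPtr (ℓ + 1))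
      simpa [Complex.sub_re, hE] using this
    have hE'0 : ∀ ℓ, ℓ < m → 0 ≤ E' ℓ := by
      intro ℓ hℓ
      have := klein (P (ℓ + 1)) (P ℓ) (hPD (ℓ + 1) hℓ) (hPD ℓ hℓ.le) (hPtr (ℓ + 1)) (hPtr ℓ)
      simpa [Complex.sub_re, hE'] using this
    have hEE' : ∀ ℓ : ℕ, E ℓ + E' ℓ = (1 / (m : ℝ)) * (h ℓ - h (ℓ + 1)) := by
      intro ℓ
      have h1 : (P ℓ - P (ℓ + 1)) * (matLog (P ℓ) - matLog (P (ℓ + 1)))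
          = ((1 : ℝ) / m) • ((ρk - ρk1) * matLog (P ℓ) - (ρk - ρk1) * matLog (P (ℓ + 1))) := by
        rw [hstep ℓ, smul_mul_assoc, mul_sub]
      have h2 := congrArg (fun X : Matrix n n ℂ => X.trace.re) h1
      simp only [sub_mul, mul_sub, trace_sub, trace_smul, Complex.sub_re, smul_eq_mul,
        Complex.real_smul, Complex.mul_re, Complex.ofReal_re, Complex.ofReal_im,
        zero_mul, sub_zero] at h2
      simp only [hE, hE', hh, sub_mul, trace_sub, Complex.sub_re]
      linarith
    have hsumE_le : ∑ ℓ ∈ Finset.range m, E ℓ ≤ Cst * (1 / m) := by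
      have h1 : ∑ ℓ ∈ Finset.range m, E ℓ ≤ ∑ ℓ ∈ Finset.range m, (E ℓ + E' ℓ) := by
        refine Finset.sum_le_sum fun ℓ hℓ => ?_
        have := hE'0 ℓ (Finset.mem_range.1 hℓ)
        linarith
      have h2 : ∑ ℓ ∈ Finset.range m, (E ℓ + E' ℓ) = (1 / (m : ℝ)) * (h 0 - h m) := by
        simp only [hEE']
        rw [← Finset.mul_sum, Finset.sum_range_sub' h]
      have h3 : h 0 - h m = Cst := by
        rw [hh]
        simp only [hP0, hPm, hCst]
      rw [h2, h3] at h1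
      linarith [h1]
    have hsumE_nonneg : 0 ≤ ∑ ℓ ∈ Finset.range m, E ℓ :=
      Finset.sum_nonneg fun ℓ hℓ => hE0 ℓ (Finset.mem_range.1 hℓ)
    constructor
    · rw [hsum, hg0m]; linarith
    · rw [hsum, hg0m]; linarith
  have hub : ∀ᶠ m : ℕ in Filter.atTop, f m ≤ ΔS :=
    Filter.eventually_atTop.2 ⟨1, fun m hm => (key m hm).1⟩
  have hlb : ∀ᶠ m : ℕ in Filter.atTop, ΔS - Cst * (1 / (m : ℝ)) ≤ f m :=
    Filter.eventually_atTop.2 ⟨1, fun m hm => (key m hm).2⟩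
  have hlim : Filter.Tendsto (fun m : ℕ => ΔS - Cst * (1 / (m : ℝ)))
      Filter.atTop (nhds ΔS) := by
    have h1 := tendsto_one_div_atTop_nhds_zero_nat.const_mul Cst
    have h2 := Filter.Tendsto.sub (tendsto_const_nhds (x := ΔS) (f := Filter.atTop)) h1
    simpa using h2
  exact tendsto_of_tendsto_of_tendsto_of_le_of_le' hlim tendsto_const_nhds hlb hub
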